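/- Let f : [0,∞) → V be a bounded measurable function into a separable Banach space V such that for almost every t ∈ [0,1] the limit A_t = lim_{N→∞} (1/N) ∑_{n=0}^{N-1} f(t+n) exists. Then lim_{b→∞} (1/b) ∫_0^b f(x) dx exists and equals ∫_0^1 A_t dt. -/

import Mathlib

open MeasureTheory Filter Topology

theorem stmt2 {V : Type*} [NormedAddCommGroup V] [NormedSpace ℝ V]
    [CompleteSpace V] [SecondCountableTopology V]
    (f : ℝ → V) (hmeas : StronglyMeasurable f)
    (M : ℝ) (hbd : ∀ x, ‖f x‖ ≤ M)
    (A : ℝ → V)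
    (hA : ∀ᵐ t ∂(volume.restrict (Set.Icc (0:ℝ) 1)),
      Tendsto (fun N : ℕ => (N : ℝ)⁻¹ • ∑ n ∈ Finset.range N, f (t + n))
        atTop (𝓝 (A t))) :
    Tendsto (fun b : ℝ => b⁻¹ • ∫ x in Set.Icc (0:ℝ) b, f x) atTop
      (𝓝 (∫ t in Set.Icc (0:ℝ) 1, A t)) := by
  have hM : 0 ≤ M := (norm_nonneg _).trans (hbd 0)
  -- integrability on finite-measure sets
  have hIO : ∀ (g : ℝ → V), StronglyMeasurable g → (∀ x, ‖g x‖ ≤ M) →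
      ∀ s : Set ℝ, volume s < ⊤ → IntegrableOn g s := by
    intro g hg hgbd s hs
    exact Integrable.mono' (integrableOn_const hs.ne : IntegrableOn (fun _ => M) s volume) hg.aestronglyMeasurable
      (ae_of_all _ hgbd)
  have hIOf : ∀ s : Set ℝ, volume s < ⊤ → IntegrableOn f s := hIO f hmeas hbd
  have hII : ∀ a b : ℝ, IntervalIntegrable f volume a b := by
    intro a b
    exact (hIOf _ measure_Icc_lt_top).intervalIntegrable
  -- key identity
  have key : ∀ N : ℕ, (∫ t in Set.Icc (0:ℝ) 1, (N:ℝ)⁻¹ • ∑ n ∈ Finset.range N, f (t + n))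
      = (N:ℝ)⁻¹ • ∫ x in Set.Icc (0:ℝ) (N:ℝ), f x := by
    intro N
    rw [integral_smul]
    congr 1
    have hint : ∀ n ∈ Finset.range N, IntegrableOn (fun t => f (t + (n:ℝ)))
        (Set.Icc (0:ℝ) 1) := fun n _ =>
      hIO _ (hmeas.comp_measurable (measurable_add_const _)) (fun x => hbd _) _
        measure_Icc_lt_top
    rw [integral_finset_sum _ hint]
    have h1 : ∀ n : ℕ, (∫ t in Set.Icc (0:ℝ) 1, f (t + n))
        = ∫ x in (n:ℝ)..((n:ℝ)+1), f x := by
      intro n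
      rw [integral_Icc_eq_integral_Ioc,
        ← intervalIntegral.integral_of_le (by norm_num : (0:ℝ) ≤ 1),
        intervalIntegral.integral_comp_add_right]
      norm_num [add_comm]
    have hsum : ∑ k ∈ Finset.range N, (∫ x in ((k:ℝ))..((k:ℝ)+1), f x)
        = ∫ x in (0:ℝ)..(N:ℝ), f x := by
      have h := intervalIntegral.sum_integral_adjacent_intervals
        (a := fun k : ℕ => (k:ℝ)) (μ := volume) (f := f) (n := N)
        (fun k _ => hII _ _)
      push_cast at h
      simpa using h
    rw [integral_Icc_eq_integral_Ioc,
      ← intervalIntegral.integral_of_le (Nat.cast_nonneg N), ← hsum]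
    exact Finset.sum_congr rfl fun n _ => h1 n
  -- dominated convergence
  set L := ∫ t in Set.Icc (0:ℝ) 1, A t with hLdef
  have hdc : Tendsto (fun N : ℕ => ∫ t in Set.Icc (0:ℝ) 1,
      (N:ℝ)⁻¹ • ∑ n ∈ Finset.range N, f (t + n)) atTop (𝓝 L) := by
    refine tendsto_integral_of_dominated_convergence (fun _ => M) ?_ ?_ ?_ hA
    · intro n
      exact ((Finset.stronglyMeasurable_fun_sum _ (fun k _ =>
        hmeas.comp_measurable (measurable_add_const _))).const_smul
        ((n:ℝ)⁻¹)).aestronglyMeasurable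
    · exact integrableOn_const measure_Icc_lt_top.ne
    · intro n
      refine ae_of_all _ fun t => ?_
      rcases Nat.eq_zero_or_pos n with h0 | hpos
      · simp [h0, hM]
      have hn : (0:ℝ) < n := by exact_mod_cast hpos
      calc ‖(n:ℝ)⁻¹ • ∑ k ∈ Finset.range n, f (t + k)‖
          = (n:ℝ)⁻¹ * ‖∑ k ∈ Finset.range n, f (t + k)‖ := by
            rw [norm_smul, Real.norm_eq_abs, abs_of_nonneg (by positivity)]
        _ ≤ (n:ℝ)⁻¹ * ((n:ℝ) * M) := by
            apply mul_le_mul_of_nonneg_left _ (by positivity)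
            calc ‖∑ k ∈ Finset.range n, f (t + k)‖
                ≤ ∑ k ∈ Finset.range n, ‖f (t + k)‖ := norm_sum_le _ _
              _ ≤ ∑ _k ∈ Finset.range n, M := Finset.sum_le_sum fun k _ => hbd _
              _ = (n:ℝ) * M := by simp [mul_comm]
        _ = M := by field_simp
  have hg : Tendsto (fun N : ℕ => ((N:ℝ))⁻¹ • ∫ x in Set.Icc (0:ℝ) (N:ℝ), f x)
      atTop (𝓝 L) := hdc.congr key
  have hgf : Tendsto (fun b : ℝ => ((⌊b⌋₊:ℝ))⁻¹ • ∫ x in Set.Icc (0:ℝ) ((⌊b⌋₊:ℝ)), f x)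
      atTop (𝓝 L) := hg.comp tendsto_nat_floor_atTop
  -- difference tends to zero
  have hdiff : Tendsto (fun b : ℝ => (b⁻¹ • ∫ x in Set.Icc (0:ℝ) b, f x)
      - ((⌊b⌋₊:ℝ))⁻¹ • ∫ x in Set.Icc (0:ℝ) ((⌊b⌋₊:ℝ)), f x) atTop (𝓝 0) := by
    apply squeeze_zero_norm' (a := fun b : ℝ => 2 * M / b)
    · filter_upwards [eventually_ge_atTop (1:ℝ)] with b hb
      set n : ℝ := (⌊b⌋₊ : ℝ) with hndef
      have hb0 : (0:ℝ) < b := lt_of_lt_of_le one_pos hb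
      have hn1 : (1:ℝ) ≤ n := by
        rw [hndef]
        exact_mod_cast Nat.le_floor (α := ℝ) (by exact_mod_cast hb)
      have hn0 : (0:ℝ) < n := lt_of_lt_of_le one_pos hn1
      have hnb : n ≤ b := Nat.floor_le hb0.le
      have hbn1 : b - n ≤ 1 := by
        have := Nat.lt_floor_add_one b
        linarith
      -- convert to interval integrals
      have e1 : (∫ x in Set.Icc (0:ℝ) b, f x) = ∫ x in (0:ℝ)..b, f x := by
        rw [integral_Icc_eq_integral_Ioc, intervalIntegral.integral_of_le hb0.le]
      have e2 : (∫ x in Set.Icc (0:ℝ) n, f x) = ∫ x in (0:ℝ)..n, f x := by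
        rw [integral_Icc_eq_integral_Ioc, intervalIntegral.integral_of_le hn0.le]
      rw [e1, e2]
      have hsub : (∫ x in (0:ℝ)..b, f x) - ∫ x in (0:ℝ)..n, f x
          = ∫ x in n..b, f x :=
        intervalIntegral.integral_interval_sub_left (hII 0 b) (hII 0 n)
      have hsplit : b⁻¹ • (∫ x in (0:ℝ)..b, f x) - n⁻¹ • (∫ x in (0:ℝ)..n, f x)
          = b⁻¹ • (∫ x in n..b, f x) + (b⁻¹ - n⁻¹) • (∫ x in (0:ℝ)..n, f x) := by
        rw [← hsub, smul_sub, sub_smul]; abel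
      rw [hsplit]
      have hb1 : ‖b⁻¹ • (∫ x in n..b, f x)‖ ≤ M / b := by
        rw [norm_smul, Real.norm_eq_abs, abs_of_nonneg (by positivity)]
        have : ‖∫ x in n..b, f x‖ ≤ M * |b - n| :=
          intervalIntegral.norm_integral_le_of_norm_le_const fun x _ => hbd x
        have h2 : ‖∫ x in n..b, f x‖ ≤ M := by
          refine this.trans ?_
          rw [abs_of_nonneg (by linarith)]
          nlinarith
        calc b⁻¹ * ‖∫ x in n..b, f x‖ ≤ b⁻¹ * M := by
              exact mul_le_mul_of_nonneg_left h2 (by positivity)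
          _ = M / b := by rw [inv_mul_eq_div]
      have hb2 : ‖(b⁻¹ - n⁻¹) • (∫ x in (0:ℝ)..n, f x)‖ ≤ M / b := by
        rw [norm_smul, Real.norm_eq_abs]
        have habs : |b⁻¹ - n⁻¹| = n⁻¹ - b⁻¹ := by
          rw [abs_of_nonpos (by
            have : b⁻¹ ≤ n⁻¹ := by
              apply inv_anti₀ hn0 hnb
            linarith), neg_sub]
        rw [habs]
        have hnorm : ‖∫ x in (0:ℝ)..n, f x‖ ≤ M * n := by
          have : ‖∫ x in (0:ℝ)..n, f x‖ ≤ M * |n - 0| :=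
            intervalIntegral.norm_integral_le_of_norm_le_const fun x _ => hbd x
          simpa [abs_of_nonneg hn0.le] using this
        calc (n⁻¹ - b⁻¹) * ‖∫ x in (0:ℝ)..n, f x‖
            ≤ (n⁻¹ - b⁻¹) * (M * n) := by
              apply mul_le_mul_of_nonneg_left hnorm
              have : b⁻¹ ≤ n⁻¹ := inv_anti₀ hn0 hnb
              linarith
          _ = M * (b - n) / b := by field_simp
          _ ≤ M / b := by
              rw [div_le_div_iff₀ hb0 hb0]
              nlinarith [mul_nonneg hM hb0.le]
      calc ‖b⁻¹ • (∫ x in n..b, f x) + (b⁻¹ - n⁻¹) • (∫ x in (0:ℝ)..n, f x)‖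
          ≤ ‖b⁻¹ • (∫ x in n..b, f x)‖ + ‖(b⁻¹ - n⁻¹) • (∫ x in (0:ℝ)..n, f x)‖ :=
            norm_add_le _ _
        _ ≤ M / b + M / b := add_le_add hb1 hb2
        _ = 2 * M / b := by ring
    · exact Tendsto.div_atTop tendsto_const_nhds tendsto_id
  have := hdiff.add hgf
  rw [zero_add] at this
  refine this.congr fun b => ?_
  abel
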